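/- Let G = (V,E,T) be a finite undirected multigraph with a set T ⊆ V of tagged vertices. The edges of G can be oriented so that every untagged vertex has out-degree at least one if and only if every connected component of G either contains a tagged vertex or contains a cycle (equivalently, is not a tree consisting only of untagged vertices). -/

import Mathlib

/-- Connectivity (reachability) in a multigraph given by an edge-index type `E`
and an endpoint map `ends : E → V × V`. -/
def MGReach {V E : Type} (ends : E → V × V) : V → V → Prop :=
  Relation.ReflTransGen (fun a b => ∃ e, ends e = (a, b) ∨ ends e = (b, a))

section Aux

variable {V E : Type}

private lemma rtg_lift {r r' : V → V → Prop} (h : ∀ a b, r a b → Relation.ReflTransGen r' a b)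
    {a b : V} (hab : Relation.ReflTransGen r a b) : Relation.ReflTransGen r' a b := by
  induction hab with
  | refl => exact .refl
  | tail _ step ih => exact ih.trans (h _ _ step)

/-- The simple graph on `V` using only edges satisfying `ok`. -/
def mgGraph (ends : E → V × V) (ok : E → Prop) : SimpleGraph V where
  Adj a b := a ≠ b ∧ ∃ e, ok e ∧ (ends e = (a, b) ∨ ends e = (b, a))
  symm := by
    constructor
    rintro a b ⟨hne, e, hok, h | h⟩
    · exact ⟨hne.symm, e, hok, Or.inr h⟩
    · exact ⟨hne.symm, e, hok, Or.inl h⟩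
  loopless := by constructor; rintro a ⟨hne, _⟩; exact hne rfl

variable (ends : E → V × V) (hloop : ∀ e, (ends e).1 ≠ (ends e).2)

include hloop in
private lemma ne_of_ends {e : E} {a b : V} (h : ends e = (a, b) ∨ ends e = (b, a)) : a ≠ b := by
  rcases h with h | h
  · have := hloop e; rw [h] at this; exact this
  · have := hloop e; rw [h] at this; exact this.symm

include hloop in
private lemma mgReach_iff {v w : V} :
    MGReach ends v w ↔ (mgGraph ends (fun _ => True)).Reachable v w := by
  rw [SimpleGraph.reachable_iff_reflTransGen]
  constructor
  · refine rtg_lift fun a b hab => ?_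
    obtain ⟨e, he⟩ := hab
    exact Relation.ReflTransGen.single ⟨ne_of_ends ends hloop he, e, trivial, he⟩
  · refine rtg_lift fun a b hab => ?_
    obtain ⟨-, e, -, he⟩ := hab
    exact Relation.ReflTransGen.single ⟨e, he⟩

private lemma exists_step (G : SimpleGraph V) {u t : V} (h : G.Reachable u t) (hne : u ≠ t) :
    ∃ w, G.Adj u w ∧ G.dist w t < G.dist u t := by
  obtain ⟨p, hp⟩ := h.exists_walk_length_eq_dist
  cases p with
  | nil => exact absurd rfl hne
  | @cons _ w _ ha q =>
      refine ⟨w, ha, ?_⟩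
      calc G.dist w t ≤ q.length := SimpleGraph.dist_le q
        _ < q.length + 1 := Nat.lt_succ_self _
        _ = G.dist u t := by simpa using hp

/-- Single step of `MGReach`. -/
private lemma mg_step {e : E} {a b : V} (h : ends e = (a, b) ∨ ends e = (b, a)) :
    MGReach ends a b :=
  Relation.ReflTransGen.single ⟨e, h⟩

include hloop in
/-- If the endpoints of `e₀` remain connected after deleting `e₀`, then any
`MGReach`-connected pair is connected in the graph minus `e₀`. -/
private lemma detour (e₀ : E)
    (h2 : (mgGraph ends (· ≠ e₀)).Reachable (ends e₀).1 (ends e₀).2)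
    {v w : V} (h : MGReach ends v w) : (mgGraph ends (· ≠ e₀)).Reachable v w := by
  rw [SimpleGraph.reachable_iff_reflTransGen]
  rw [SimpleGraph.reachable_iff_reflTransGen] at h2
  refine rtg_lift (fun a b hab => ?_) h
  obtain ⟨e, he⟩ := hab
  by_cases h0 : e = e₀
  · subst h0
    rcases he with he | he
    · have h1 : (ends e).1 = a := by rw [he]
      have h2' : (ends e).2 = b := by rw [he]
      rw [h1, h2'] at h2; exact h2
    · have h1 : (ends e).1 = b := by rw [he]
      have h2' : (ends e).2 = a := by rw [he]
      rw [h1, h2'] at h2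
      rw [← SimpleGraph.reachable_iff_reflTransGen] at h2 ⊢
      exact h2.symm
  · exact Relation.ReflTransGen.single ⟨ne_of_ends ends hloop he, e, h0, he⟩

private lemma avoid (e₁ : E) (v₀ : V) :
    ∀ n, ∀ u, (mgGraph ends (fun _ => True)).Reachable u v₀ →
      (mgGraph ends (fun _ => True)).dist u v₀ = n →
      n < max ((mgGraph ends (fun _ => True)).dist (ends e₁).1 v₀)
              ((mgGraph ends (fun _ => True)).dist (ends e₁).2 v₀) →
      (mgGraph ends (· ≠ e₁)).Reachable u v₀ := by
  intro n
  induction n using Nat.strong_induction_on with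
  | _ n ih =>
    intro u hr hd hlt
    rcases eq_or_ne u v₀ with rfl | hne
    · exact SimpleGraph.Reachable.refl u
    · obtain ⟨w, hadj, hw⟩ := exists_step _ hr hne
      have hrw : (mgGraph ends (fun _ => True)).Reachable w v₀ := (hadj.symm.reachable).trans hr
      obtain ⟨hne', e, -, hrep⟩ := id hadj
      have he : e ≠ e₁ := by
        rintro rfl
        rcases lt_max_iff.mp hlt with h | h
        · rcases hrep with h2 | h2
          · have e1 : (ends e).1 = u := by rw [h2]
            rw [e1, hd] at h; omega
          · have e1 : (ends e).1 = w := by rw [h2]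
            rw [e1] at h; omega
        · rcases hrep with h2 | h2
          · have e1 : (ends e).2 = w := by rw [h2]
            rw [e1] at h; omega
          · have e1 : (ends e).2 = u := by rw [h2]
            rw [e1, hd] at h; omega
      have hih := ih ((mgGraph ends (fun _ => True)).dist w v₀) (by omega) w hrw rfl
        (by omega)
      have hadj' : (mgGraph ends (· ≠ e₁)).Adj u w := ⟨hne', e, he, hrep⟩
      exact hadj'.reachable.trans hih

include hloop in
private lemma cyc_edge [Fintype V] [Fintype E] (v₀ : V)
    (hcnt : Set.ncard {w | MGReach ends v₀ w} ≤
      Set.ncard {e : E | MGReach ends v₀ (ends e).1}) :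
    ∃ e₀ : E, MGReach ends v₀ (ends e₀).1 ∧
      (mgGraph ends (· ≠ e₀)).Reachable (ends e₀).1 (ends e₀).2 := by
  by_contra hbr
  push_neg at hbr
  have hre2 : ∀ e, MGReach ends v₀ (ends e).1 → MGReach ends v₀ (ends e).2 :=
    fun e h => h.trans (mg_step ends (Or.inl rfl))
  have hereach : ∀ w, MGReach ends v₀ w → (mgGraph ends (fun _ => True)).Reachable w v₀ :=
    fun w h => ((mgReach_iff ends hloop).mp h).symm
  -- the two endpoints of a non-bridge-free edge are at distinct distances from v₀
  have key : ∀ e, MGReach ends v₀ (ends e).1 →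
      (mgGraph ends (fun _ => True)).dist (ends e).1 v₀ ≠
      (mgGraph ends (fun _ => True)).dist (ends e).2 v₀ := by
    intro e he heq
    have hx := hereach _ he
    have hy := hereach _ (hre2 e he)
    have hxy : (ends e).1 ≠ (ends e).2 := hloop e
    have hD : (mgGraph ends (fun _ => True)).dist (ends e).1 v₀ ≠ 0 := by
      intro h0
      have h1 : (ends e).1 = v₀ := hx.dist_eq_zero_iff.mp h0
      have h2 : (ends e).2 = v₀ := hy.dist_eq_zero_iff.mp (by omega)
      exact hxy (h1.trans h2.symm)
    have side : ∀ z, (mgGraph ends (fun _ => True)).Reachable z v₀ →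
        (mgGraph ends (fun _ => True)).dist z v₀ =
          (mgGraph ends (fun _ => True)).dist (ends e).1 v₀ →
        (mgGraph ends (· ≠ e)).Reachable z v₀ := by
      intro z hz hdz
      have hzne : z ≠ v₀ := by
        rintro rfl
        rw [SimpleGraph.dist_self] at hdz
        exact hD hdz.symm
      obtain ⟨u', hadj, hlt⟩ := exists_step _ hz hzne
      have hru' : (mgGraph ends (fun _ => True)).Reachable u' v₀ := (hadj.symm.reachable).trans hz
      obtain ⟨hne', e', -, hrep'⟩ := id hadj
      have he' : e' ≠ e := by
        rintro rfl
        rcases hrep' with h | h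
        · have g1 : (ends e').1 = z := by rw [h]
          have g2 : (ends e').2 = u' := by rw [h]
          rw [← g1, ← g2] at hlt
          omega
        · have g1 : (ends e').1 = u' := by rw [h]
          have g2 : (ends e').2 = z := by rw [h]
          rw [← g1, ← g2] at hlt
          omega
      have hav := avoid ends e v₀ ((mgGraph ends (fun _ => True)).dist u' v₀) u' hru' rfl
        (lt_max_iff.mpr (Or.inl (by omega)))
      have hadj' : (mgGraph ends (· ≠ e)).Adj z u' := ⟨hne', e', he', hrep'⟩
      exact hadj'.reachable.trans hav
    exact hbr e he ((side _ hx rfl).trans ((side _ hy heq.symm).symm))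
  have hout : ∀ e, MGReach ends v₀ (ends e).1 →
      ∃ w u : V, (ends e = (w, u) ∨ ends e = (u, w)) ∧
        (mgGraph ends (fun _ => True)).dist u v₀ <
        (mgGraph ends (fun _ => True)).dist w v₀ := by
    intro e he
    rcases lt_or_gt_of_ne (key e he) with h | h
    · exact ⟨(ends e).2, (ends e).1, Or.inr rfl, h⟩
    · exact ⟨(ends e).1, (ends e).2, Or.inl rfl, h⟩
  have : Nonempty V := ⟨v₀⟩
  choose! φ uu hrep hlt using hout
  have hmem : ∀ e, MGReach ends v₀ (ends e).1 → φ e = (ends e).1 ∨ φ e = (ends e).2 := by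
    intro e he
    rcases hrep e he with h | h
    · left; rw [h]
    · right; rw [h]
  have hmaps : ∀ e ∈ {e : E | MGReach ends v₀ (ends e).1},
      φ e ∈ {w | MGReach ends v₀ w} \ {v₀} := by
    intro e he
    have hl := hlt e he
    constructor
    · rcases hmem e he with h | h
      · rw [h]; exact he
      · rw [h]; exact hre2 e he
    · simp only [Set.mem_singleton_iff]
      intro h0
      rw [h0, SimpleGraph.dist_self] at hl
      omega
  have hinj : Set.InjOn φ {e : E | MGReach ends v₀ (ends e).1} := by
    intro e₁ he₁ e₂ he₂ heq12
    by_contra hne12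
    obtain ⟨h₁, hd₁⟩ := And.intro (hrep e₁ he₁) (hlt e₁ he₁)
    obtain ⟨h₂, hd₂⟩ := And.intro (hrep e₂ he₂) (hlt e₂ he₂)
    set u₁ := uu e₁ with hu₁
    set u₂ := uu e₂ with hu₂
    rw [← heq12] at h₂ hd₂
    have hmax : (mgGraph ends (fun _ => True)).dist (φ e₁) v₀ ≤
        max ((mgGraph ends (fun _ => True)).dist (ends e₁).1 v₀)
            ((mgGraph ends (fun _ => True)).dist (ends e₁).2 v₀) := by
      rcases h₁ with h | h
      · have h1 : (ends e₁).1 = φ e₁ := by rw [h]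
        rw [← h1]; exact le_max_left _ _
      · have h1 : (ends e₁).2 = φ e₁ := by rw [h]
        rw [← h1]; exact le_max_right _ _
    have hru₁ : (mgGraph ends (fun _ => True)).Reachable u₁ v₀ := by
      rcases h₁ with h | h
      · have h1 : (ends e₁).2 = u₁ := by rw [h]
        rw [← h1]; exact hereach _ (hre2 e₁ he₁)
      · have h1 : (ends e₁).1 = u₁ := by rw [h]
        rw [← h1]; exact hereach _ he₁
    have hru₂ : (mgGraph ends (fun _ => True)).Reachable u₂ v₀ := by
      rcases h₂ with h | h
      · have h1 : (ends e₂).2 = u₂ := by rw [h]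
        rw [← h1]; exact hereach _ (hre2 e₂ he₂)
      · have h1 : (ends e₂).1 = u₂ := by rw [h]
        rw [← h1]; exact hereach _ he₂
    have A1 : (mgGraph ends (· ≠ e₁)).Reachable u₁ v₀ :=
      avoid ends e₁ v₀ _ u₁ hru₁ rfl (lt_of_lt_of_le hd₁ hmax)
    have A2 : (mgGraph ends (· ≠ e₁)).Reachable u₂ v₀ :=
      avoid ends e₁ v₀ _ u₂ hru₂ rfl (lt_of_lt_of_le hd₂ hmax)
    have hadj : (mgGraph ends (· ≠ e₁)).Adj (φ e₁) u₂ := by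
      refine ⟨?_, e₂, fun h => hne12 h.symm, h₂⟩
      intro hh
      rw [← hh] at hd₂
      omega
    have A3 : (mgGraph ends (· ≠ e₁)).Reachable (φ e₁) v₀ := hadj.reachable.trans A2
    refine hbr e₁ he₁ ?_
    rcases h₁ with h | h
    · have e1 : (ends e₁).1 = φ e₁ := by rw [h]
      have e2 : (ends e₁).2 = u₁ := by rw [h]
      rw [e1, e2]; exact A3.trans A1.symm
    · have e1 : (ends e₁).1 = u₁ := by rw [h]
      have e2 : (ends e₁).2 = φ e₁ := by rw [h]
      rw [e1, e2]; exact A1.trans A3.symm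
  have hc1 : Set.ncard {e : E | MGReach ends v₀ (ends e).1} ≤
      Set.ncard ({w | MGReach ends v₀ w} \ {v₀}) :=
    Set.ncard_le_ncard_of_injOn φ hmaps hinj (Set.toFinite _)
  have hc2 : Set.ncard ({w | MGReach ends v₀ w} \ {v₀}) <
      Set.ncard {w | MGReach ends v₀ w} :=
    Set.ncard_diff_singleton_lt_of_mem Relation.ReflTransGen.refl (Set.toFinite _)
  omega

end Aux

/-- Selection predicate: which out-edge each untagged vertex picks. -/
private def Sel {V E : Type} (ends : E → V × V) (T : Finset V)
    (rep tg : V → V) (cy : V → E) (v : V) (e : E) : Prop :=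
  ((∃ w, MGReach ends (rep v) w ∧ w ∈ T) ∧
     ∃ u, (ends e = (v, u) ∨ ends e = (u, v)) ∧
       (mgGraph ends (fun _ => True)).dist u (tg (rep v)) <
       (mgGraph ends (fun _ => True)).dist v (tg (rep v))) ∨
  (¬(∃ w, MGReach ends (rep v) w ∧ w ∈ T) ∧
     v = (ends (cy (rep v))).1 ∧ e = cy (rep v)) ∨
  (¬(∃ w, MGReach ends (rep v) w ∧ w ∈ T) ∧
     v ≠ (ends (cy (rep v))).1 ∧ e ≠ cy (rep v) ∧
     ∃ u, (ends e = (v, u) ∨ ends e = (u, v)) ∧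
       (mgGraph ends (· ≠ cy (rep v))).dist u (ends (cy (rep v))).1 <
       (mgGraph ends (· ≠ cy (rep v))).dist v (ends (cy (rep v))).1)

private lemma sel_end {V E : Type} {ends : E → V × V} {T : Finset V}
    {rep tg : V → V} {cy : V → E} {v : V} {e : E}
    (h : Sel ends T rep tg cy v e) : v = (ends e).1 ∨ v = (ends e).2 := by
  simp only [Sel] at h
  rcases h with ⟨-, u, hu, -⟩ | ⟨-, hva, hee⟩ | ⟨-, -, -, u, hu, -⟩
  · rcases hu with h | h
    · left; rw [h]
    · right; rw [h]
  · left; rw [hee]; exact hva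
  · rcases hu with h | h
    · left; rw [h]
    · right; rw [h]

private lemma pairup {V E : Type} {ends : E → V × V} {v v' u u' : V} {e : E}
    (h1 : ends e = (v, u) ∨ ends e = (u, v))
    (h2 : ends e = (v', u') ∨ ends e = (u', v'))
    (hne : v ≠ v') : u = v' ∧ u' = v := by
  rcases h1 with h1 | h1 <;> rcases h2 with h2 | h2 <;> rw [h1] at h2 <;>
      simp only [Prod.mk.injEq] at h2
  · exact absurd h2.1 hne
  · exact ⟨h2.2, h2.1.symm⟩
  · exact ⟨h2.1, h2.2.symm⟩
  · exact absurd h2.2 hne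

private lemma sel_inj {V E : Type} (ends : E → V × V) (T : Finset V)
    (rep tg : V → V) (cy : V → E)
    (hrepc : ∀ v w, MGReach ends v w → rep v = rep w)
    {v v' : V} {e : E}
    (h : Sel ends T rep tg cy v e) (h' : Sel ends T rep tg cy v' e) : v = v' := by
  by_contra hne
  have hvv' : MGReach ends v v' := by
    rcases sel_end h with h1 | h1 <;> rcases sel_end h' with h2 | h2
    · exact absurd (h1.trans h2.symm) hne
    · exact mg_step ends (Or.inl (by rw [h1, h2]))
    · exact mg_step ends (Or.inr (by rw [h1, h2]))
    · exact absurd (h1.trans h2.symm) hne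
  have hre : rep v = rep v' := hrepc _ _ hvv'
  simp only [Sel] at h h'
  rcases h with ⟨hT, u, hu, hd⟩ | ⟨hT, hva, hee⟩ | ⟨hT, hva, hene, u, hu, hd⟩ <;>
    rcases h' with ⟨hT', u', hu', hd'⟩ | ⟨hT', hva', hee'⟩ | ⟨hT', hva', hene', u', hu', hd'⟩
  · obtain ⟨hp1, hp2⟩ := pairup hu hu' hne
    rw [hre, hp1] at hd
    rw [hp2] at hd'
    omega
  · rw [hre] at hT; exact hT' hT
  · rw [hre] at hT; exact hT' hT
  · rw [hre] at hT; exact hT hT'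
  · rw [hre] at hva; exact hne (hva.trans hva'.symm)
  · rw [hre] at hee; exact hene' hee
  · rw [hre] at hT; exact hT hT'
  · rw [← hre] at hee'; exact hene hee'
  · obtain ⟨hp1, hp2⟩ := pairup hu hu' hne
    rw [hre, hp1] at hd
    rw [hp2] at hd'
    omega

/-- A finite multigraph (loop-free; parallel edges allowed) with
tagged vertex set `T` admits an orientation in which every untagged vertex has
out-degree at least one iff every connected component contains a tagged vertex or a
cycle.  A connected component contains a cycle iff its number of edges is at least
its number of vertices (it is a tree iff #edges = #vertices − 1). -/
theorem orientation_no_untagged_sink {V E : Type} [Fintype V] [Fintype E]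
    [DecidableEq V]
    (ends : E → V × V) (hloop : ∀ e, (ends e).1 ≠ (ends e).2)
    (T : Finset V) :
    (∃ o : E → Bool,
      ∀ v ∉ T, ∃ e, (if o e then (ends e).1 else (ends e).2) = v) ↔
    (∀ v : V,
      (∃ w, MGReach ends v w ∧ w ∈ T) ∨
      Set.ncard {w | MGReach ends v w} ≤
        Set.ncard {e : E | MGReach ends v (ends e).1}) := by
  classical
  constructor
  · rintro ⟨o, ho⟩ v
    by_cases htag : ∃ w, MGReach ends v w ∧ w ∈ T
    · exact Or.inl htag
    · right
      push_neg at htag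
      have hsel : ∀ w, MGReach ends v w →
          ∃ e, (if o e then (ends e).1 else (ends e).2) = w :=
        fun w hw => ho w (htag w hw)
      have hne : Nonempty E := ⟨(hsel v Relation.ReflTransGen.refl).choose⟩
      choose! g hg using hsel
      apply Set.ncard_le_ncard_of_injOn g ?_ ?_ (Set.toFinite _)
      · intro w hw
        have h1 := hg w hw
        simp only [Set.mem_setOf_eq]
        by_cases hoe : o (g w)
        · rw [if_pos hoe] at h1
          rw [h1]; exact hw
        · rw [if_neg hoe] at h1
          exact Relation.ReflTransGen.tail hw ⟨g w, Or.inr (Prod.ext rfl h1)⟩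
      · intro a ha b hb hab
        have h1 := hg a ha
        have h2 := hg b hb
        rw [hab] at h1
        exact h1.symm.trans h2
  · intro hcond
    rcases isEmpty_or_nonempty V with hV | hV
    · exact ⟨fun _ => true, fun v => isEmptyElim v⟩
    rcases isEmpty_or_nonempty E with hE | hE
    · refine ⟨fun _ => true, fun v hv => ?_⟩
      rcases hcond v with ⟨w, hw, hwT⟩ | hcnt
      · have hvw : v = w := by
          induction hw with
          | refl => rfl
          | tail _ step ih => obtain ⟨e, -⟩ := step; exact isEmptyElim e
        exact absurd (hvw ▸ hwT) hv
      · exfalso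
        have h1 : {e : E | MGReach ends v (ends e).1} = ∅ :=
          Set.eq_empty_of_isEmpty _
        have h2 : 0 < Set.ncard {w | MGReach ends v w} :=
          (Set.ncard_pos (Set.toFinite _)).mpr ⟨v, Relation.ReflTransGen.refl⟩
        rw [h1, Set.ncard_empty] at hcnt
        omega
    have hES : Equivalence (MGReach ends) := by
      constructor
      · intro x; exact Relation.ReflTransGen.refl
      · intro x y h
        rw [mgReach_iff ends hloop] at h ⊢
        exact h.symm
      · intro x y z h1 h2; exact h1.trans h2
    letI s : Setoid V := ⟨MGReach ends, hES⟩
    set rep : V → V := fun v => (Quotient.mk s v).out with hrepdef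
    have hrep : ∀ v, MGReach ends (rep v) v := fun v => Quotient.mk_out v
    have hrepc : ∀ v w, MGReach ends v w → rep v = rep w := fun v w h =>
      congrArg Quotient.out (Quotient.sound h)
    have hsymm : ∀ {x y : V}, MGReach ends x y → MGReach ends y x := fun h => hES.symm h
    have htt : ∀ r : V, (∃ w, MGReach ends r w ∧ w ∈ T) →
        ∃ t, MGReach ends r t ∧ t ∈ T := fun r h => h
    choose! tg htg1 htg2 using htt
    have htc : ∀ r : V, ¬(∃ w, MGReach ends r w ∧ w ∈ T) →
        ∃ e₀ : E, MGReach ends r (ends e₀).1 ∧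
          (mgGraph ends (· ≠ e₀)).Reachable (ends e₀).1 (ends e₀).2 := fun r h =>
      cyc_edge ends hloop r ((hcond r).resolve_left h)
    choose! cy hcy1 hcy2 using htc
    have hex : ∀ v, v ∉ T → ∃ e, Sel ends T rep tg cy v e := by
      intro v hv
      by_cases h : ∃ w, MGReach ends (rep v) w ∧ w ∈ T
      · have ht1 := htg1 _ h
        have ht2 := htg2 _ h
        have hvt : MGReach ends v (tg (rep v)) := (hsymm (hrep v)).trans ht1
        have hnet : v ≠ tg (rep v) := fun hh => hv (hh ▸ ht2)
        have hr : (mgGraph ends (fun _ => True)).Reachable v (tg (rep v)) :=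
          (mgReach_iff ends hloop).mp hvt
        obtain ⟨u, hadj, hdlt⟩ := exists_step _ hr hnet
        obtain ⟨-, e, -, hrepr⟩ := id hadj
        exact ⟨e, Or.inl ⟨h, u, hrepr, hdlt⟩⟩
      · by_cases hva : v = (ends (cy (rep v))).1
        · exact ⟨cy (rep v), Or.inr (Or.inl ⟨h, hva, rfl⟩)⟩
        · have h1 := hcy1 _ h
          have h2 := hcy2 _ h
          have hva' : MGReach ends v (ends (cy (rep v))).1 := (hsymm (hrep v)).trans h1
          have hr : (mgGraph ends (· ≠ cy (rep v))).Reachable v (ends (cy (rep v))).1 :=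
            detour ends hloop _ h2 hva'
          obtain ⟨u, hadj, hdlt⟩ := exists_step _ hr hva
          obtain ⟨-, e, hene0, hrepr⟩ := id hadj
          exact ⟨e, Or.inr (Or.inr ⟨h, hva, hene0, u, hrepr, hdlt⟩)⟩
    choose! f hf using hex
    set o : E → Bool := fun e =>
      if (∃ v, v ∉ T ∧ f v = e ∧ (ends e).1 = v) then true else false with ho
    refine ⟨o, ?_⟩
    intro v hv
    refine ⟨f v, ?_⟩
    have hs := hf v hv
    rcases sel_end hs with hfst | hsnd
    · have hP : ∃ v', v' ∉ T ∧ f v' = f v ∧ (ends (f v)).1 = v' := ⟨v, hv, rfl, hfst.symm⟩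
      have hb : o (f v) = true := by
        simp only [ho]
        rw [if_pos hP]
      rw [hb]
      simpa using hfst.symm
    · have hfstne : (ends (f v)).1 ≠ v := fun hh => hloop (f v) (hh.trans hsnd)
      have hP : ¬∃ v', v' ∉ T ∧ f v' = f v ∧ (ends (f v)).1 = v' := by
        rintro ⟨v', hv'T, hfe, hfst'⟩
        have hs' := hf v' hv'T
        rw [hfe] at hs'
        have hvv : v = v' := sel_inj ends T rep tg cy hrepc hs hs'
        exact hfstne (by rw [hfst', ← hvv])
      have hb : o (f v) = false := by
        simp only [ho]
        rw [if_neg hP]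
      rw [hb]
      simpa using hsnd.symm
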